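/- In H one has s_0^p − s_0 = t^{−1}, and s_n^p − s_n = s_{n−1} for every integer n ≥ 1; that is, the elements s_n form an infinite tower of Artin–Schreier roots above t^{−1}. -/

import Mathlib

/-!
Common setup: `p` a prime, `F` an algebraic closure of `𝔽_p`, `H = F((t^ℚ))` the Hahn series
field with its canonical additive valuation `v` (minimum of the support), the Newton–Puiseux
subfield `K ⊆ H`, the elements `s_n`, the series `s = ∑ tⁿ·s_n`, the truncations `s_{n,i}`,
the rationals `δ(n,i) = n - 1/p^(i+1)`, and the depth-zero valuations `ω_{a,δ}`.
-/

open Polynomial HahnSeries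

variable (p : ℕ) [Fact p.Prime]

/-- `F`, an algebraic closure of `𝔽_p`. -/
abbrev Fbar : Type := AlgebraicClosure (ZMod p)

/-- The Hahn series field `H = F((t^ℚ))`. -/
abbrev H : Type := HahnSeries ℚ (Fbar p)

/-- The additive valuation `v(f) = min (supp f)`, with `v 0 = ∞`. -/
noncomputable def v (f : H p) : WithTop ℚ := f.orderTop

/-- The exponent `-1/p^(j+1)`. -/
def expo (j : ℕ) : ℚ := -((p : ℚ) ^ (j + 1))⁻¹

lemma one_lt_p : (1 : ℚ) < p := by
  exact_mod_cast (Fact.out : p.Prime).one_lt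

lemma expo_mono : Monotone (expo p) := by
  intro j k hjk
  have hp : (1 : ℚ) < p := one_lt_p p
  have h1 : (0 : ℚ) < (p : ℚ) ^ (j + 1) := pow_pos (lt_trans one_pos hp) _
  have h2 : (p : ℚ) ^ (j + 1) ≤ (p : ℚ) ^ (k + 1) :=
    pow_le_pow_right₀ (le_of_lt hp) (by omega)
  have := inv_anti₀ h1 h2
  simp only [expo, neg_le_neg_iff]
  linarith

lemma isPWO_univ_nat : (Set.univ : Set ℕ).IsPWO :=
  (Set.isWF_univ_iff.2 ⟨wellFounded_lt⟩).isPWO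

-- `s_n = ∑_{j ≥ n} C(j,n)·t^(-1/p^(j+1))`, where `C(j,n)` is `j.choose n` reduced mod `p`.
open Classical in
noncomputable def sn (n : ℕ) : H p where
  coeff q := if h : ∃ j : ℕ, n ≤ j ∧ q = expo p j then (Nat.choose h.choose n : Fbar p) else 0
  isPWO_support' := by
    apply ((isPWO_univ_nat.image_of_monotone (expo_mono p)).mono)
    intro q hq
    simp only [Function.mem_support] at hq
    have h : ∃ j : ℕ, n ≤ j ∧ q = expo p j := by
      by_contra h
      rw [dif_neg h] at hq
      exact hq rfl
    obtain ⟨j, _, rfl⟩ := h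
    exact ⟨j, Set.mem_univ j, rfl⟩

-- `s = ∑_{n ≥ 0} tⁿ·s_n`, i.e. the series with coefficient `C(j,n)` at `n - 1/p^(j+1)`.
open Classical in
noncomputable def sH : H p where
  coeff q := if h : ∃ nj : ℕ × ℕ, nj.1 ≤ nj.2 ∧ q = (nj.1 : ℚ) + expo p nj.2 then
      (Nat.choose h.choose.2 h.choose.1 : Fbar p) else 0
  isPWO_support' := by
    have hmono : Monotone (fun nj : ℕ × ℕ => (nj.1 : ℚ) + expo p nj.2) := by
      intro a b hab
      exact add_le_add (by exact_mod_cast hab.1) (expo_mono p hab.2)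
    apply ((isPWO_univ_nat.prod isPWO_univ_nat).image_of_monotone hmono).mono
    intro q hq
    simp only [Function.mem_support] at hq
    have h : ∃ nj : ℕ × ℕ, nj.1 ≤ nj.2 ∧ q = (nj.1 : ℚ) + expo p nj.2 := by
      by_contra h
      rw [dif_neg h] at hq
      exact hq rfl
    obtain ⟨nj, _, rfl⟩ := h
    exact ⟨nj, by simp [Set.mem_prod], rfl⟩

/-- The additive map `ℤ →+ ℚ`, `k ↦ k/N`. -/
def embQ (N : ℕ) : ℤ →+ ℚ where
  toFun k := (k : ℚ) / (N : ℚ)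
  map_zero' := by simp
  map_add' := by intros; push_cast; ring

lemma embQ_inj {N : ℕ} (hN : 0 < N) : Function.Injective (embQ N) := by
  intro a b hab
  have hN' : (0 : ℚ) < N := by exact_mod_cast hN
  simpa [embQ, div_eq_div_iff hN'.ne' hN'.ne', hN'.ne'] using hab

lemma embQ_mono {N : ℕ} (hN : 0 < N) : ∀ g g' : ℤ, embQ N g ≤ embQ N g' ↔ g ≤ g' := by
  intro g g'
  have hN' : (0 : ℚ) < N := by exact_mod_cast hN
  simp [embQ, div_le_div_iff_of_pos_right hN', Int.cast_le]

lemma embQ_strictMono {N : ℕ} (hN : 0 < N) : StrictMono (embQ N) := by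
  have := embQ_mono hN
  exact strictMono_of_le_iff_le fun a b => (this a b).symm

/-- Laurent series (Hahn series over `ℤ`) mapped into `H p` via `k ↦ k/N`. -/
noncomputable def laurentInc (N : ℕ) (hN : 0 < N) : HahnSeries ℤ (Fbar p) →+* H p :=
  HahnSeries.embDomainRingHom (embQ N) (embQ_inj hN) (embQ_mono hN)

lemma mem_range_laurentInc_iff {N : ℕ} (hN : 0 < N) (f : H p) :
    (∃ g, laurentInc p N hN g = f) ↔ ∀ q ∈ f.support, ∃ k : ℤ, q = (k : ℚ) / N := by
  constructor
  · rintro ⟨g, rfl⟩ q hq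
    obtain ⟨k, -, rfl⟩ := HahnSeries.support_embDomain_subset hq
    exact ⟨k, rfl⟩
  · intro hf
    classical
    have hpwo : (Function.support fun k : ℤ => f.coeff (embQ N k)).IsPWO := by
      apply Set.IsWF.isPWO
      rw [Set.isWF_iff_no_descending_seq]
      intro φ hφ hmem
      apply Set.isWF_iff_no_descending_seq.mp f.isWF_support (fun n => embQ N (φ n))
        ((embQ_strictMono hN).comp_strictAnti hφ)
      intro n
      exact hmem n
    refine ⟨⟨fun k => f.coeff (embQ N k), hpwo⟩, ?_⟩
    apply HahnSeries.ext
    funext q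
    by_cases hq : q ∈ Set.range (embQ N)
    · obtain ⟨k, rfl⟩ := hq
      exact HahnSeries.embDomain_mk_coeff (embQ_inj hN) (embQ_mono hN)
    · rw [show (laurentInc p N hN ⟨fun k => f.coeff (embQ N k), hpwo⟩).coeff q = 0 from
        HahnSeries.embDomain_notin_range hq]
      by_contra hne
      obtain ⟨k, hk⟩ := hf q (by simpa [HahnSeries.mem_support] using Ne.symm hne)
      exact hq ⟨k, hk.symm⟩

/-- The Newton–Puiseux field `K`: Hahn series whose support lies in `(1/N)·ℤ` for some `N > 0`. -/
noncomputable def KNP : Subfield (H p) where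
  carrier := {f : H p | ∃ N : ℕ, 0 < N ∧ ∀ q ∈ f.support, ∃ k : ℤ, q = (k : ℚ) / N}
  zero_mem' := ⟨1, one_pos, by simp⟩
  one_mem' := by
    refine ⟨1, one_pos, fun q hq => ?_⟩
    rw [HahnSeries.support_one] at hq
    exact ⟨0, by simp [Set.mem_singleton_iff.mp hq]⟩
  add_mem' := by
    rintro x y ⟨N, hN, hx⟩ ⟨M, hM, hy⟩
    refine ⟨N * M, Nat.mul_pos hN hM, fun q hq => ?_⟩
    rcases HahnSeries.support_add_subset x y hq with h | h
    · obtain ⟨k, rfl⟩ := hx q h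
      refine ⟨k * M, ?_⟩
      have hM' : (M : ℚ) ≠ 0 := by exact_mod_cast hM.ne'
      have hN' : (N : ℚ) ≠ 0 := by exact_mod_cast hN.ne'
      push_cast
      field_simp
    · obtain ⟨k, rfl⟩ := hy q h
      refine ⟨k * N, ?_⟩
      have hM' : (M : ℚ) ≠ 0 := by exact_mod_cast hM.ne'
      have hN' : (N : ℚ) ≠ 0 := by exact_mod_cast hN.ne'
      push_cast
      field_simp
  neg_mem' := by
    rintro x ⟨N, hN, hx⟩
    exact ⟨N, hN, fun q hq => hx q (by rwa [HahnSeries.support_neg] at hq)⟩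
  mul_mem' := by
    rintro x y ⟨N, hN, hx⟩ ⟨M, hM, hy⟩
    refine ⟨N * M, Nat.mul_pos hN hM, fun q hq => ?_⟩
    obtain ⟨q₁, hq₁, q₂, hq₂, rfl⟩ := HahnSeries.support_mul_subset hq
    obtain ⟨k₁, rfl⟩ := hx q₁ hq₁
    obtain ⟨k₂, rfl⟩ := hy q₂ hq₂
    refine ⟨k₁ * M + k₂ * N, ?_⟩
    have hM' : (M : ℚ) ≠ 0 := by exact_mod_cast hM.ne'
    have hN' : (N : ℚ) ≠ 0 := by exact_mod_cast hN.ne'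
    push_cast
    field_simp
  inv_mem' := by
    rintro x ⟨N, hN, hx⟩
    obtain ⟨g, rfl⟩ := (mem_range_laurentInc_iff p hN x).mpr hx
    rw [← map_inv₀]
    exact ⟨N, hN, ((mem_range_laurentInc_iff p hN _).mp ⟨g⁻¹, rfl⟩)⟩

/-- The truncation `s_{n,i} = ∑_{m<n} tᵐ·s_m + tⁿ·∑_{n ≤ j < i} C(j,n)·t^(-1/p^(j+1))`. -/
noncomputable def strunc (n i : ℕ) : H p :=
  (∑ m ∈ Finset.range n, HahnSeries.single (m : ℚ) 1 * sn p m)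
  + HahnSeries.single (n : ℚ) 1 *
      (∑ j ∈ Finset.Ico n i, HahnSeries.single (expo p j) ((Nat.choose j n : Fbar p)))

/-- `δ(n,i) = n - 1/p^(i+1)`. -/
def dlt (n i : ℕ) : ℚ := (n : ℚ) - ((p : ℚ) ^ (i + 1))⁻¹

/-- The depth-zero valuation `ω_{a,δ}(f) = min_ℓ (v(a_ℓ) + ℓ·δ)`, where
`f = ∑_ℓ a_ℓ·(x-a)^ℓ` is the Taylor expansion of `f` at `a`. -/
noncomputable def om (a : H p) (δ : ℚ) (f : Polynomial (H p)) : WithTop ℚ :=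
  (Finset.range (f.natDegree + 1)).inf
    fun ℓ => v p ((Polynomial.taylor a f).coeff ℓ) + (((ℓ : ℚ) * δ : ℚ) : WithTop ℚ)

-- The degree `[K(b) : K]` of an element `b ∈ H` over the Newton–Puiseux field `K`.
set_option synthInstance.maxHeartbeats 1000000 in
noncomputable def degK (b : H p) : ℕ :=
  Module.finrank (KNP p) (IntermediateField.adjoin (KNP p) {b})

lemma tinv_mem : HahnSeries.single (-1 : ℚ) (1 : Fbar p) ∈ KNP p := by
  refine ⟨1, one_pos, fun q hq => ?_⟩
  have := HahnSeries.support_single_subset hq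
  exact ⟨-1, by simp [Set.mem_singleton_iff.mp this]⟩

/-- `t^(-1) = single (-1) 1` as an element of `K`. -/
noncomputable def tinv : KNP p := ⟨HahnSeries.single (-1 : ℚ) (1 : Fbar p), tinv_mem p⟩

/-! ### Auxiliary lemmas for the Artin–Schreier tower -/

lemma p_pos : (0 : ℚ) < (p : ℚ) := lt_trans one_pos (one_lt_p p)

lemma expo_neg (j : ℕ) : expo p j < 0 := by
  have h : (0 : ℚ) < (p : ℚ) ^ (j + 1) := pow_pos (p_pos p) _
  have := inv_pos.mpr h
  simp only [expo]
  linarith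

lemma expo_strictMono : StrictMono (expo p) := by
  intro j k hjk
  have h1 : (0 : ℚ) < (p : ℚ) ^ (j + 1) := pow_pos (p_pos p) _
  have h2 : (p : ℚ) ^ (j + 1) < (p : ℚ) ^ (k + 1) :=
    pow_lt_pow_right₀ (one_lt_p p) (by omega)
  have h3 : ((p : ℚ) ^ (k + 1))⁻¹ < ((p : ℚ) ^ (j + 1))⁻¹ := by
    apply inv_strictAnti₀ h1 h2
  simp only [expo]
  linarith

lemma expo_inj : Function.Injective (expo p) := (expo_strictMono p).injective

lemma p_mul_expo (j : ℕ) (hj : 1 ≤ j) : (p : ℚ) * expo p j = expo p (j - 1) := by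
  have hp0 : (p : ℚ) ≠ 0 := (p_pos p).ne'
  have hpow : ((p : ℚ) ^ (j + 1)) = (p : ℚ) ^ j * p := pow_succ _ _
  have hne : (p : ℚ) ^ j ≠ 0 := pow_ne_zero _ hp0
  have hne1 : (p : ℚ) ^ (j + 1) ≠ 0 := pow_ne_zero _ hp0
  simp only [expo, show j - 1 + 1 = j from by omega]
  rw [hpow]
  field_simp

lemma p_mul_expo0 : (p : ℚ) * expo p 0 = -1 := by
  have hp0 : (p : ℚ) ≠ 0 := (p_pos p).ne'
  simp only [expo, pow_one]
  field_simp
  ring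

open Classical in
lemma sn_coeff (n : ℕ) (q : ℚ) :
    (sn p n).coeff q = if h : ∃ j : ℕ, n ≤ j ∧ q = expo p j then
      (Nat.choose h.choose n : Fbar p) else 0 := rfl

lemma sn_coeff_eq (n j : ℕ) (h : n ≤ j) :
    (sn p n).coeff (expo p j) = (j.choose n : Fbar p) := by
  classical
  have hex : ∃ k : ℕ, n ≤ k ∧ expo p j = expo p k := ⟨j, h, rfl⟩
  rw [sn_coeff, dif_pos hex]
  have hj : hex.choose = j := (expo_inj p hex.choose_spec.2.symm)
  rw [hj]

lemma sn_coeff_ne (n : ℕ) (q : ℚ) (h : ∀ j : ℕ, n ≤ j → q ≠ expo p j) :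
    (sn p n).coeff q = 0 := by
  classical
  rw [sn_coeff, dif_neg]
  rintro ⟨j, hj, rfl⟩
  exact h j hj rfl

/-- The finite truncation `∑_{n ≤ j < i} C(j,n)·t^(expo j)`. -/
noncomputable def TT (n i : ℕ) : H p :=
  ∑ j ∈ Finset.Ico n i, HahnSeries.single (expo p j) ((j.choose n : Fbar p))

lemma coeff_sum {α : Type*} (s : Finset α) (f : α → H p) (q : ℚ) :
    (∑ a ∈ s, f a).coeff q = ∑ a ∈ s, (f a).coeff q := by
  classical
  induction s using Finset.induction_on with
  | empty => simp
  | insert a s ha ih => rw [Finset.sum_insert ha, Finset.sum_insert ha, HahnSeries.coeff_add, ih]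

lemma TT_coeff_ne (n i : ℕ) (q : ℚ) (h : ∀ j : ℕ, n ≤ j → j < i → q ≠ expo p j) :
    (TT p n i).coeff q = 0 := by
  rw [TT, coeff_sum]
  apply Finset.sum_eq_zero
  intro j hj
  rw [Finset.mem_Ico] at hj
  exact HahnSeries.coeff_single_of_ne (h j hj.1 hj.2)

lemma TT_coeff_expo (n i j : ℕ) (h1 : n ≤ j) (h2 : j < i) :
    (TT p n i).coeff (expo p j) = (j.choose n : Fbar p) := by
  rw [TT, coeff_sum]
  rw [Finset.sum_eq_single_of_mem j (Finset.mem_Ico.mpr ⟨h1, h2⟩)]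
  · exact HahnSeries.coeff_single_same _ _
  · intro k _ hkj
    exact HahnSeries.coeff_single_of_ne (fun hc => hkj (expo_inj p hc.symm))

lemma tail_coeff (n i : ℕ) (hni : n ≤ i) (q : ℚ)
    (h : ∀ j : ℕ, i ≤ j → q ≠ expo p j) : (sn p n - TT p n i).coeff q = 0 := by
  rw [HahnSeries.coeff_sub]
  by_cases hex : ∃ j : ℕ, n ≤ j ∧ q = expo p j
  · obtain ⟨j, hj, rfl⟩ := hex
    have hji : j < i := by
      by_contra h'
      exact h j (le_of_not_gt h') rfl
    rw [sn_coeff_eq p n j hj, TT_coeff_expo p n i j hj hji, sub_self]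
  · rw [sn_coeff_ne p n q (fun j hj hq => hex ⟨j, hj, hq⟩),
      TT_coeff_ne p n i q (fun j hj _ hq => hex ⟨j, hj, hq⟩), sub_zero]

lemma tail_support (n i : ℕ) (hni : n ≤ i) (q : ℚ)
    (h : (sn p n - TT p n i).coeff q ≠ 0) : expo p i ≤ q ∧ q < 0 := by
  by_cases hex : ∃ j : ℕ, i ≤ j ∧ q = expo p j
  · obtain ⟨j, hj, rfl⟩ := hex
    exact ⟨(expo_mono p) hj, expo_neg p j⟩
  · exfalso
    exact h (tail_coeff p n i hni q (fun j hj hq => hex ⟨j, hj, hq⟩))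

lemma pow_support_bound (x : H p) (a : ℚ)
    (hx : ∀ q : ℚ, x.coeff q ≠ 0 → a ≤ q ∧ q < 0) :
    ∀ k : ℕ, 1 ≤ k → ∀ q : ℚ, (x ^ k).coeff q ≠ 0 → (k : ℚ) * a ≤ q ∧ q < 0 := by
  intro k
  induction k with
  | zero => exact fun h => absurd h (by omega)
  | succ m ih =>
    intro _ q hq
    rcases Nat.eq_zero_or_pos m with hm | hm
    · subst hm
      rw [pow_one] at hq
      simpa using hx q hq
    · rw [pow_succ] at hq
      have hq' : q ∈ ((x ^ m) * x).support := by simpa [HahnSeries.mem_support] using hq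
      obtain ⟨q₁, hq₁, q₂, hq₂, rfl⟩ := HahnSeries.support_mul_subset hq'
      have h1 := ih hm q₁ (by simpa [HahnSeries.mem_support] using hq₁)
      have h2 := hx q₂ (by simpa [HahnSeries.mem_support] using hq₂)
      refine ⟨?_, ?_⟩
      · show ((m + 1 : ℕ) : ℚ) * a ≤ q₁ + q₂
        push_cast
        have hexp : ((m : ℚ) + 1) * a = (m : ℚ) * a + a := by ring
        linarith [h1.1, h2.1, hexp.le, hexp.ge]
      · show q₁ + q₂ < 0
        linarith [h1.2, h2.2]

instance : CharP (H p) p :=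
  charP_of_injective_ringHom (f := (HahnSeries.C : Fbar p →+* H p)) HahnSeries.C_injective p

lemma natCast_pow_p (m : ℕ) : ((m : Fbar p)) ^ p = (m : Fbar p) := by
  have h1 : (algebraMap (ZMod p) (Fbar p)) (m : ZMod p) = (m : Fbar p) :=
    map_natCast (algebraMap (ZMod p) (Fbar p)) m
  rw [← h1, ← map_pow, ZMod.pow_card]

lemma TT_succ_top (n i : ℕ) (h : n ≤ i) :
    TT p n (i + 1) = TT p n i + HahnSeries.single (expo p i) ((i.choose n : Fbar p)) := by
  rw [TT, TT, Finset.sum_Ico_succ_top h]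

lemma Tpow0 (i : ℕ) (hi : 1 ≤ i) :
    (TT p 0 i) ^ p = HahnSeries.single (-1 : ℚ) (1 : Fbar p) + TT p 0 (i - 1) := by
  rw [TT, sum_pow_char]
  simp only [HahnSeries.single_pow, Nat.choose_zero_right, Nat.cast_one, one_pow]
  rw [Finset.sum_eq_sum_Ico_succ_bot (by omega : (0:ℕ) < i)]
  have h0 : (p • expo p 0 : ℚ) = -1 := by
    rw [nsmul_eq_mul]; exact p_mul_expo0 p
  rw [h0]
  congr 1
  have himg : Finset.Ico 1 i = (Finset.Ico 0 (i - 1)).image (· + 1) := by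
    rw [Finset.image_add_right_Ico]
    congr 1 <;> omega
  rw [himg, Finset.sum_image (fun a _ b _ h => by omega)]
  rw [TT]
  apply Finset.sum_congr rfl
  intro j _
  rw [nsmul_eq_mul, p_mul_expo p (j + 1) (by omega), show j + 1 - 1 = j from by omega,
    Nat.choose_zero_right, Nat.cast_one]

lemma single_add' (a : ℚ) (r s : Fbar p) :
    HahnSeries.single a (r + s) = HahnSeries.single a r + HahnSeries.single a s := by
  apply HahnSeries.ext
  funext q
  by_cases hq : q = a <;>
    simp [HahnSeries.coeff_add, HahnSeries.coeff_single, hq]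

lemma Tpow (n i : ℕ) (hn : 1 ≤ n) (hni : n ≤ i) :
    (TT p n i) ^ p = TT p (n - 1) (i - 1) + TT p n (i - 1) := by
  rw [TT, sum_pow_char]
  have step1 : ∀ j ∈ Finset.Ico n i,
      (HahnSeries.single (expo p j) ((j.choose n : Fbar p))) ^ p =
      HahnSeries.single (expo p (j - 1)) ((j.choose n : Fbar p)) := by
    intro j hj
    rw [Finset.mem_Ico] at hj
    rw [HahnSeries.single_pow, nsmul_eq_mul, p_mul_expo p j (by omega), natCast_pow_p]
  rw [Finset.sum_congr rfl step1]
  have himg : Finset.Ico n i = (Finset.Ico (n - 1) (i - 1)).image (· + 1) := by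
    rw [Finset.image_add_right_Ico]
    congr 1 <;> omega
  rw [himg, Finset.sum_image (fun a _ b _ h => by omega)]
  have step2 : ∀ j ∈ Finset.Ico (n - 1) (i - 1),
      HahnSeries.single (expo p (j + 1 - 1)) (((j + 1).choose n : Fbar p)) =
      HahnSeries.single (expo p j) ((j.choose (n - 1) : Fbar p)) +
      HahnSeries.single (expo p j) ((j.choose n : Fbar p)) := by
    intro j _
    have hch : (j + 1).choose n = j.choose (n - 1) + j.choose n := by
      obtain ⟨m, rfl⟩ : ∃ m, n = m + 1 := ⟨n - 1, by omega⟩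
      simp [Nat.choose_succ_succ]
    rw [show j + 1 - 1 = j from by omega, hch]
    push_cast
    exact single_add' p _ _ _
  rw [Finset.sum_congr rfl step2, Finset.sum_add_distrib]
  have h2 : ∑ j ∈ Finset.Ico (n - 1) (i - 1),
      HahnSeries.single (expo p j) ((j.choose n : Fbar p)) = TT p n (i - 1) := by
    rcases Nat.eq_or_lt_of_le hni with hie | hlt
    · subst hie
      rw [Finset.Ico_self, TT,
        show Finset.Ico n (n - 1) = (∅ : Finset ℕ) from Finset.Ico_eq_empty (by omega)]
    · rw [Finset.sum_eq_sum_Ico_succ_bot (by omega : n - 1 < i - 1)]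
      rw [show (n - 1).choose n = 0 from Nat.choose_eq_zero_of_lt (by omega)]
      rw [show n - 1 + 1 = n from by omega]
      simp [TT]
  rw [h2]
  rfl

lemma choose_i (n : ℕ) (q : ℚ) : ∃ i : ℕ, n + 1 ≤ i ∧ (q < expo p (i - 1) ∨ 0 ≤ q) := by
  rcases le_or_gt 0 q with h | h
  · exact ⟨n + 1, le_refl _, Or.inr h⟩
  · obtain ⟨k, hk⟩ := pow_unbounded_of_one_lt (R := ℚ) (-q)⁻¹ (one_lt_p p)
    refine ⟨max (n + 1) k, le_max_left _ _, Or.inl ?_⟩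
    set i := max (n + 1) k with hi
    have hq0 : (0 : ℚ) < -q := by linarith
    have hki : (p : ℚ) ^ k ≤ (p : ℚ) ^ i :=
      pow_le_pow_right₀ (le_of_lt (one_lt_p p)) (le_max_right _ _)
    have h2 : (-q)⁻¹ < (p : ℚ) ^ i := lt_of_lt_of_le hk hki
    have h3 : ((p : ℚ) ^ i)⁻¹ < -q := by
      have := inv_strictAnti₀ (inv_pos.mpr hq0) h2
      rwa [inv_inv] at this
    have hie : expo p (i - 1) = -((p : ℚ) ^ i)⁻¹ := by
      have hii : i - 1 + 1 = i := by
        have : n + 1 ≤ i := le_max_left _ _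
        omega
      simp only [expo, hii]
    rw [hie]
    linarith

theorem artin_schreier_key (n : ℕ) (i : ℕ) (hi : n + 1 ≤ i) (q : ℚ)
    (hq : q < expo p (i - 1) ∨ 0 ≤ q) :
    (sn p n ^ p - sn p n).coeff q = ((TT p n i) ^ p - TT p n i).coeff q := by
  have hni : n ≤ i := by omega
  set τ := sn p n - TT p n i with hτ
  have hsplit : sn p n = TT p n i + τ := by rw [hτ]; ring
  have hpow : sn p n ^ p = (TT p n i) ^ p + τ ^ p := by
    rw [hsplit, add_pow_char]
  have hne : ∀ j : ℕ, i - 1 ≤ j → q ≠ expo p j := by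
    intro j hj heq
    rcases hq with h | h
    · have h2 : expo p (i - 1) ≤ expo p j := expo_mono p hj
      rw [heq] at h
      linarith
    · have := expo_neg p j
      rw [heq] at h
      linarith
  have hτq : τ.coeff q = 0 :=
    tail_coeff p n i hni q (fun j hj => hne j (by omega))
  have hτp : (τ ^ p).coeff q = 0 := by
    by_contra hcon
    have hb := pow_support_bound p τ (expo p i)
      (fun r hr => tail_support p n i hni r hr) p
      (Fact.out : p.Prime).one_lt.le q hcon
    have hpe : (p : ℚ) * expo p i = expo p (i - 1) := p_mul_expo p i (by omega)
    rcases hq with h | h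
    · rw [hpe] at hb
      linarith [hb.1]
    · linarith [hb.2]
  rw [HahnSeries.coeff_sub, HahnSeries.coeff_sub, hpow, HahnSeries.coeff_add, hτp, add_zero]
  have hsnq : (sn p n).coeff q = (TT p n i).coeff q := by
    have h0 := hτq
    rw [hτ, HahnSeries.coeff_sub] at h0
    exact sub_eq_zero.mp h0
  rw [hsnq]

/-- `s₀^p - s₀ = t⁻¹` and `sₙ^p - sₙ = s_{n-1}` for `n ≥ 1`: the elements `sₙ`
form an infinite tower of Artin–Schreier roots above `t⁻¹`. -/
theorem artin_schreier_tower :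
    sn p 0 ^ p - sn p 0 = HahnSeries.single (-1 : ℚ) (1 : Fbar p) ∧
    ∀ n : ℕ, 1 ≤ n → sn p n ^ p - sn p n = sn p (n - 1) := by
  constructor
  · apply HahnSeries.ext
    funext q
    obtain ⟨i, hi, hq⟩ := choose_i p 0 q
    rw [artin_schreier_key p 0 i hi q hq]
    have hT : (TT p 0 i) ^ p = HahnSeries.single (-1 : ℚ) 1 + TT p 0 (i - 1) :=
      Tpow0 p i (by omega)
    have hTi : TT p 0 i = TT p 0 (i - 1) +
        HahnSeries.single (expo p (i - 1)) (((i - 1).choose 0 : Fbar p)) := by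
      have h := TT_succ_top p 0 (i - 1) (by omega)
      rwa [show i - 1 + 1 = i from by omega] at h
    rw [hT, hTi]
    have hsingle : (HahnSeries.single (expo p (i - 1))
        (((i - 1).choose 0 : Fbar p))).coeff q = 0 := by
      apply HahnSeries.coeff_single_of_ne
      intro hc
      rcases hq with h | h
      · rw [hc] at h; linarith
      · have := expo_neg p (i - 1); rw [hc] at h; linarith
    rw [HahnSeries.coeff_sub, HahnSeries.coeff_add, HahnSeries.coeff_add, hsingle]
    ring
  · intro n hn
    apply HahnSeries.ext
    funext q
    obtain ⟨i, hi, hq⟩ := choose_i p n q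
    rw [artin_schreier_key p n i hi q hq]
    have hT : (TT p n i) ^ p = TT p (n - 1) (i - 1) + TT p n (i - 1) :=
      Tpow p n i hn (by omega)
    have hTi : TT p n i = TT p n (i - 1) +
        HahnSeries.single (expo p (i - 1)) (((i - 1).choose n : Fbar p)) := by
      have h := TT_succ_top p n (i - 1) (by omega)
      rwa [show i - 1 + 1 = i from by omega] at h
    have hne : ∀ j : ℕ, i - 1 ≤ j → q ≠ expo p j := by
      intro j hj heq
      rcases hq with h | h
      · have h2 : expo p (i - 1) ≤ expo p j := expo_mono p hj
        rw [heq] at h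
        linarith
      · have := expo_neg p j
        rw [heq] at h
        linarith
    have hsingle : (HahnSeries.single (expo p (i - 1))
        (((i - 1).choose n : Fbar p))).coeff q = 0 :=
      HahnSeries.coeff_single_of_ne (hne (i - 1) (le_refl _))
    have htail : (sn p (n - 1)).coeff q = (TT p (n - 1) (i - 1)).coeff q := by
      have h := tail_coeff p (n - 1) (i - 1) (by omega) q (fun j hj => hne j hj)
      rw [HahnSeries.coeff_sub] at h
      exact sub_eq_zero.mp h
    rw [hT, hTi, HahnSeries.coeff_sub, HahnSeries.coeff_add, HahnSeries.coeff_add, hsingle,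
      htail]
    ring
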